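/- Let X be a Fréchet space over 𝕂 ∈ {ℝ, ℂ}, let A be a multivalued linear operator in X (a linear subspace of X × X), let λ ∈ 𝕂 with |λ| ≥ 1, and suppose there exists a non-zero continuous linear functional x* on X such that ⟨x*, y⟩ = λ⟨x*, x⟩ for every pair (x, y) ∈ A (i.e., λ is an eigenvalue of the adjoint A*). Then A cannot have a dense set of Li-Yorke near to zero vectors: the set {x ∈ D_∞(A) : x is Li-Yorke near to zero for A} is not dense in X. -/

import Mathlib

/-- Composition of binary relations on `X` (first `R`, then `S`). -/
def relComp {X : Type*} (R S : Set (X × X)) : Set (X × X) :=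
  {p | ∃ y, (p.1, y) ∈ R ∧ (y, p.2) ∈ S}

/-- Powers of a binary relation on `X`: `relPow R 0` is the diagonal and
`relPow R (n+1) = relPow R n ∘ R`; in particular `relPow R 1 = R`. -/
def relPow {X : Type*} (R : Set (X × X)) : ℕ → Set (X × X)
  | 0 => {p | p.1 = p.2}
  | n + 1 => relComp (relPow R n) R

/-- `x` is Li-Yorke near to zero for the MLO `A`: `x ∈ D_∞(A)` and for each `n ≥ 1` there is
`x_n ∈ A^n x` such that the sequence `(x_n)` has a subsequence converging to `0`. -/
def LiYorkeNearZero {𝕜 : Type*} [RCLike 𝕜] {X : Type*}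
    [AddCommGroup X] [Module 𝕜 X] [TopologicalSpace X]
    (A : Submodule 𝕜 (X × X)) (x : X) : Prop :=
  (∀ n : ℕ, ∃ y : X, (x, y) ∈ relPow (A : Set (X × X)) (n + 1)) ∧
  ∃ xs : ℕ → X, (∀ n : ℕ, (x, xs n) ∈ relPow (A : Set (X × X)) (n + 1)) ∧
    ∃ φ : ℕ → ℕ, StrictMono φ ∧
      Filter.Tendsto (fun j : ℕ => xs (φ j)) Filter.atTop (nhds 0)

/-- let `X` be a Fréchet space over `𝕜 ∈ {ℝ, ℂ}`, `A` a multivalued linear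
operator in `X`, `λ ∈ 𝕜` with `|λ| ≥ 1`, and suppose there is a non-zero continuous linear
functional `x*` with `⟨x*, y⟩ = λ ⟨x*, x⟩` for all `(x, y) ∈ A` (i.e. `λ ∈ σ_p(A*)`). Then the
set of Li-Yorke near to zero vectors of `A` is not dense in `X`. -/
theorem no_dense_liYorke_near_zero {𝕜 : Type*} [RCLike 𝕜] {X : Type*}
    [AddCommGroup X] [Module 𝕜 X] [MetricSpace X] [IsTopologicalAddGroup X]
    [ContinuousSMul 𝕜 X] [CompleteSpace X]
    [Module ℝ X] [IsScalarTower ℝ 𝕜 X] [LocallyConvexSpace ℝ X]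
    (A : Submodule 𝕜 (X × X)) (lam : 𝕜) (hlam : 1 ≤ ‖lam‖)
    (xstar : X →L[𝕜] 𝕜) (hxstar : xstar ≠ 0)
    (h : ∀ p : X × X, p ∈ A → xstar p.2 = lam * xstar p.1) :
    ¬ Dense {x : X | LiYorkeNearZero A x} := by
  -- key: (x,y) ∈ relPow A n → xstar y = lam^n * xstar x
  have key : ∀ n : ℕ, ∀ p : X × X, p ∈ relPow (A : Set (X × X)) n →
      xstar p.2 = lam ^ n * xstar p.1 := by
    intro n
    induction n with
    | zero => intro p hp; simp [relPow] at hp; simp [hp]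
    | succ n ih =>
      rintro ⟨x, z⟩ ⟨y, hy1, hy2⟩
      have := h (y, z) hy2
      have h2 := ih (x, y) hy1
      simp only at this h2 ⊢
      rw [this, h2, pow_succ]; ring
  -- Li-Yorke vectors lie in ker xstar
  have hsub : {x : X | LiYorkeNearZero A x} ⊆ {x : X | xstar x = 0} := by
    rintro x ⟨-, xs, hxs, φ, hφ, htend⟩
    by_contra hx0
    have hconv : Filter.Tendsto (fun j => xstar (xs (φ j))) Filter.atTop (nhds 0) := by
      simpa [Function.comp_def] using (xstar.continuous.tendsto 0).comp htend
    have heq : ∀ j, ‖xstar x‖ ≤ ‖xstar (xs (φ j))‖ := by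
      intro j
      have := key (φ j + 1) (x, xs (φ j)) (hxs (φ j))
      simp only at this
      rw [this, norm_mul, norm_pow]
      nlinarith [norm_nonneg (xstar x), one_le_pow₀ hlam (n := φ j + 1)]
    have : ‖xstar x‖ ≤ 0 := by
      have := Filter.Tendsto.norm hconv
      simp only [norm_zero] at this
      exact le_of_tendsto_of_tendsto' tendsto_const_nhds this heq
    exact hx0 (norm_le_zero_iff.mp this)
  intro hd
  have hker : Dense {x : X | xstar x = 0} := hd.mono hsub
  have hclosed : IsClosed {x : X | xstar x = 0} := isClosed_eq xstar.continuous continuous_const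
  have : {x : X | xstar x = 0} = Set.univ := by
    rw [← hclosed.closure_eq]; exact hker.closure_eq
  apply hxstar
  ext x
  have hx : x ∈ {x : X | xstar x = 0} := this ▸ Set.mem_univ x
  simpa using hx
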